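/- There exists a constant C > 0 such that for every n ≥ 1, E[(∑_{x∈ℤ^d} N_n(x)^2)^2] ≤ C·n^2, where N_n(x) is the occupation time of the transient random walk (S_n). -/

import Mathlib

open MeasureTheory ProbabilityTheory Filter Real

section aux

variable {Ω : Type*} [MeasurableSpace Ω] {P : Measure Ω} [IsProbabilityMeasure P]
variable {G : Type*} [AddCommGroup G] [MeasurableSpace G] [Countable G]
  [MeasurableSingletonClass G]

lemma aux_map_add {f g f' g' : Ω → G} (hf : Measurable f) (hg : Measurable g)
    (hf' : Measurable f') (hg' : Measurable g')
    (h : IndepFun f g P) (h' : IndepFun f' g' P)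
    (hff' : Measure.map f P = Measure.map f' P) (hgg' : Measure.map g P = Measure.map g' P) :
    Measure.map (fun ω => f ω + g ω) P = Measure.map (fun ω => f' ω + g' ω) P := by
  have hadd : Measurable (fun p : G × G => p.1 + p.2) := .of_discrete
  have e1 : (fun ω => f ω + g ω) = (fun p : G × G => p.1 + p.2) ∘ (fun ω => (f ω, g ω)) := rfl
  have e1' : (fun ω => f' ω + g' ω) = (fun p : G × G => p.1 + p.2) ∘ (fun ω => (f' ω, g' ω)) := rfl
  rw [e1, e1', ← Measure.map_map hadd (hf.prodMk hg), ← Measure.map_map hadd (hf'.prodMk hg'),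
    (indepFun_iff_map_prod_eq_prod_map_map hf.aemeasurable hg.aemeasurable).mp h,
    (indepFun_iff_map_prod_eq_prod_map_map hf'.aemeasurable hg'.aemeasurable).mp h',
    hff', hgg']

lemma aux_indep_block (X : ℕ → Ω → G) (hmeas : ∀ i, Measurable (X i))
    (hindep : iIndepFun X P) {s t : Finset ℕ} (hst : Disjoint s t) :
    IndepFun (fun ω => ∑ i ∈ s, X i ω) (fun ω => ∑ i ∈ t, X i ω) P := by
  have h := hindep.indepFun_finset s t hst hmeas
  have h2 := h.comp (φ := fun v : (i : s) → G => ∑ i, v i)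
    (ψ := fun v : (i : t) → G => ∑ i, v i) Measurable.of_discrete Measurable.of_discrete
  have e : ∀ (u : Finset ℕ),
      ((fun v : (i : u) → G => ∑ i, v i) ∘ (fun a (i : u) => X i a))
        = fun a => ∑ i ∈ u, X i a := by
    intro u; funext a
    simp only [Function.comp]
    exact Finset.sum_attach u fun i => X i a
  rw [e s, e t] at h2
  exact h2

lemma aux_block_law (X : ℕ → Ω → G) (hmeas : ∀ i, Measurable (X i))
    (hindep : iIndepFun X P)
    (hident : ∀ i, Measure.map (X i) P = Measure.map (X 0) P) :
    ∀ m i, Measure.map (fun ω => ∑ k ∈ Finset.range m, X (i + k) ω) P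
         = Measure.map (fun ω => ∑ k ∈ Finset.range m, X k ω) P := by
  intro m
  induction m with
  | zero => intro i; simp
  | succ m ih =>
    intro i
    have hms : ∀ j : ℕ, Measurable fun ω => ∑ k ∈ Finset.range m, X (j + k) ω := fun j =>
      Finset.measurable_sum _ fun k _ => hmeas _
    have e : ∀ j : ℕ, (fun ω => ∑ k ∈ Finset.range (m + 1), X (j + k) ω)
        = fun ω => (∑ k ∈ Finset.range m, X (j + k) ω) + X (j + m) ω := by
      intro j; funext ω; rw [Finset.sum_range_succ]
    have e0 : (fun ω => ∑ k ∈ Finset.range (m + 1), X k ω)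
        = fun ω => (∑ k ∈ Finset.range m, X (0 + k) ω) + X (0 + m) ω := by
      funext ω; rw [Finset.sum_range_succ]; simp
    have hind : ∀ j : ℕ, IndepFun (fun ω => ∑ k ∈ Finset.range m, X (j + k) ω) (X (j + m)) P := by
      intro j
      have hD : Disjoint ((Finset.range m).image (j + ·)) {j + m} := by
        simp only [Finset.disjoint_singleton_right, Finset.mem_image, Finset.mem_range]
        rintro ⟨k, hk, hkk⟩; omega
      have h := aux_indep_block X hmeas hindep hD
      have e1 : (fun ω => ∑ k ∈ (Finset.range m).image (j + ·), X k ω)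
          = fun ω => ∑ k ∈ Finset.range m, X (j + k) ω := by
        funext ω
        rw [Finset.sum_image (by intro a _ b _ hab; simp only at hab; omega)]
      have e2 : (fun ω => ∑ k ∈ ({j + m} : Finset ℕ), X k ω) = X (j + m) := by
        funext ω; simp
      rw [e1, e2] at h
      exact h
    rw [e i, e0]
    exact aux_map_add (hms i) (hmeas _) (hms 0) (hmeas _) (hind i) (hind 0)
      (by rw [ih i, ih 0]) (by rw [hident (i + m), hident (0 + m)])

lemma aux_prob_mul (X : ℕ → Ω → G) (hmeas : ∀ i, Measurable (X i))
    (hindep : iIndepFun X P)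
    (hident : ∀ i, Measure.map (X i) P = Measure.map (X 0) P)
    {i j l : ℕ} (hij : i ≤ j) (hjl : j ≤ l) :
    P ({ω | ∑ k ∈ Finset.Ico i j, X k ω = 0} ∩ {ω | ∑ k ∈ Finset.Ico j l, X k ω = 0})
      = P {ω | ∑ k ∈ Finset.range (j - i), X k ω = 0}
        * P {ω | ∑ k ∈ Finset.range (l - j), X k ω = 0} := by
  have hBmeas : ∀ (u : Finset ℕ), Measurable fun ω => ∑ k ∈ u, X k ω := fun u =>
    Finset.measurable_sum _ fun k _ => hmeas _
  have hmap : ∀ a b : ℕ, a ≤ b →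
      Measure.map (fun ω => ∑ k ∈ Finset.Ico a b, X k ω) P
        = Measure.map (fun ω => ∑ k ∈ Finset.range (b - a), X k ω) P := by
    intro a b hab
    have e : (fun ω => ∑ k ∈ Finset.Ico a b, X k ω)
        = fun ω => ∑ k ∈ Finset.range (b - a), X (a + k) ω := by
      funext ω; rw [Finset.sum_Ico_eq_sum_range]
    rw [e]
    exact aux_block_law X hmeas hindep hident (b - a) a
  have hprob : ∀ a b : ℕ, a ≤ b →
      P {ω | ∑ k ∈ Finset.Ico a b, X k ω = 0}
        = P {ω | ∑ k ∈ Finset.range (b - a), X k ω = 0} := by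
    intro a b hab
    have h1 : {ω | ∑ k ∈ Finset.Ico a b, X k ω = 0}
        = (fun ω => ∑ k ∈ Finset.Ico a b, X k ω) ⁻¹' {0} := rfl
    have h2 : {ω | ∑ k ∈ Finset.range (b - a), X k ω = 0}
        = (fun ω => ∑ k ∈ Finset.range (b - a), X k ω) ⁻¹' {0} := rfl
    rw [h1, h2, ← Measure.map_apply (hBmeas _) (measurableSet_singleton 0),
      ← Measure.map_apply (hBmeas _) (measurableSet_singleton 0), hmap a b hab]
  have hID : IndepFun (fun ω => ∑ k ∈ Finset.Ico i j, X k ω)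
      (fun ω => ∑ k ∈ Finset.Ico j l, X k ω) P :=
    aux_indep_block X hmeas hindep (Finset.Ico_disjoint_Ico_consecutive i j l)
  have hinter := hID.meas_inter (s := (fun ω => ∑ k ∈ Finset.Ico i j, X k ω) ⁻¹' {0})
    (t := (fun ω => ∑ k ∈ Finset.Ico j l, X k ω) ⁻¹' {0})
    ⟨{0}, measurableSet_singleton 0, rfl⟩ ⟨{0}, measurableSet_singleton 0, rfl⟩
  calc P ({ω | ∑ k ∈ Finset.Ico i j, X k ω = 0} ∩ {ω | ∑ k ∈ Finset.Ico j l, X k ω = 0})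
      = P {ω | ∑ k ∈ Finset.Ico i j, X k ω = 0} * P {ω | ∑ k ∈ Finset.Ico j l, X k ω = 0} :=
        hinter
    _ = _ := by rw [hprob i j hij, hprob j l hjl]

end aux

set_option maxHeartbeats 1000000 in
theorem stmt_1
    {Ω : Type*} [MeasurableSpace Ω] (P : Measure Ω) [IsProbabilityMeasure P]
    (d : ℕ) (hd : 1 ≤ d)
    (X : ℕ → Ω → (Fin d → ℤ))
    (hmeas : ∀ i, Measurable (X i))
    (hindep : iIndepFun X P)
    (hident : ∀ i, Measure.map (X i) P = Measure.map (X 0) P)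
    (S : ℕ → Ω → (Fin d → ℤ))
    (hS : ∀ n ω, S n ω = ∑ i ∈ Finset.range n, X i ω)
    (htrans : ∑' n : ℕ, P {ω | S (n + 1) ω = 0} < ⊤)
    (N : ℕ → (Fin d → ℤ) → Ω → ℝ)
    (hN : ∀ n x ω, N n x ω = ∑ i ∈ Finset.Icc 1 n, if S i ω = x then (1 : ℝ) else 0)
 :
    ∃ C > 0, ∀ n : ℕ, 1 ≤ n →
      ∫ ω, (∑' x : Fin d → ℤ, (N n x ω) ^ 2) ^ 2 ∂P ≤ C * (n : ℝ) ^ 2 := by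
  classical
  have hSmeas : ∀ m, Measurable (S m) := by
    intro m
    have e : S m = fun ω => ∑ i ∈ Finset.range m, X i ω := funext fun ω => hS m ω
    rw [e]; exact Finset.measurable_sum _ fun i _ => hmeas i
  have hEmeas : ∀ i j : ℕ, MeasurableSet {ω | S j ω = S i ω} := by
    intro i j
    have e : {ω | S j ω = S i ω}
        = (fun ω => (S j ω, S i ω)) ⁻¹' {q : (Fin d → ℤ) × (Fin d → ℤ) | q.1 = q.2} := rfl
    rw [e]
    exact ((hSmeas j).prodMk (hSmeas i)) MeasurableSet.of_discrete
  set p : ℕ → ℝ := fun m => (P {ω | S m ω = 0}).toReal with hp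
  have hpnn : ∀ m, 0 ≤ p m := fun m => ENNReal.toReal_nonneg
  have hp0 : p 0 = 1 := by
    have e : {ω | S 0 ω = 0} = Set.univ := by
      ext ω; simp [hS 0 ω]
    simp [hp, e]
  set G1 : ℝ := (∑' k : ℕ, P {ω | S (k + 1) ω = 0}).toReal with hG1
  have hG1nn : 0 ≤ G1 := ENNReal.toReal_nonneg
  have hsum : ∀ (s : Finset ℕ) (f : ℕ → ℕ), Set.InjOn f ↑s → (∀ j ∈ s, 1 ≤ f j) →
      ∑ j ∈ s, p (f j) ≤ G1 := by
    intro s f hinj h1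
    have step : (∑ j ∈ s, P {ω | S (f j) ω = 0}) ≤ ∑' k : ℕ, P {ω | S (k + 1) ω = 0} := by
      have hinj2 : ∀ a ∈ s, ∀ b ∈ s, f a - 1 = f b - 1 → a = b := by
        intro a ha b hb hab
        have h1a := h1 a ha; have h1b := h1 b hb
        exact hinj (Finset.mem_coe.mpr ha) (Finset.mem_coe.mpr hb) (by omega)
      have himg : ∑ k ∈ s.image (fun j => f j - 1), P {ω | S (k + 1) ω = 0}
          = ∑ j ∈ s, P {ω | S (f j) ω = 0} := by
        rw [Finset.sum_image hinj2]
        refine Finset.sum_congr rfl fun j hj => ?_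
        have h1j := h1 j hj
        have e : f j - 1 + 1 = f j := by omega
        rw [e]
      rw [← himg]
      exact ENNReal.sum_le_tsum _
    calc ∑ j ∈ s, p (f j) = (∑ j ∈ s, P {ω | S (f j) ω = 0}).toReal := by
          rw [ENNReal.toReal_sum fun a _ => (measure_lt_top P _).ne]
      _ ≤ G1 := ENNReal.toReal_mono htrans.ne step
  refine ⟨2 + 16 * (1 + G1) ^ 2, by positivity, ?_⟩
  intro n hn
  set I : Finset ℕ := Finset.Icc 1 n with hI
  set ind : ℕ → ℕ → Ω → ℝ := fun i j ω => if S j ω = S i ω then 1 else 0 with hind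
  set T : ℕ → Ω → ℝ := fun i ω => ∑ j ∈ Finset.Icc (i + 1) n, ind i j ω with hT
  have hindnn : ∀ i j ω, 0 ≤ ind i j ω := by
    intro i j ω; simp only [hind]; split_ifs <;> norm_num
  have hindle : ∀ i j ω, ind i j ω ≤ 1 := by
    intro i j ω; simp only [hind]; split_ifs <;> norm_num
  have hTnn : ∀ i ω, 0 ≤ T i ω := fun i ω => Finset.sum_nonneg fun j _ => hindnn i j ω
  have hcardI : (I.card : ℝ) = n := by simp [hI, Nat.card_Icc]
  -- Step 1 : the tsum is the double sum of indicators
  have step1 : ∀ ω, (∑' x : Fin d → ℤ, (N n x ω) ^ 2) = ∑ i ∈ I, ∑ j ∈ I, ind i j ω := by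
    intro ω
    have hNx : ∀ x : Fin d → ℤ, (N n x ω) ^ 2
        = ∑ i ∈ I, ∑ j ∈ I,
          ((if S i ω = x then (1 : ℝ) else 0) * (if S j ω = x then (1 : ℝ) else 0)) := by
      intro x
      rw [hN, sq, Finset.sum_mul_sum]
    have hsummable : ∀ i j : ℕ, Summable (fun x : Fin d → ℤ =>
        (if S i ω = x then (1 : ℝ) else 0) * (if S j ω = x then (1 : ℝ) else 0)) := by
      intro i j
      apply summable_of_ne_finset_zero (s := ({S i ω} : Finset (Fin d → ℤ)))
      intro x hx
      simp only [Finset.mem_singleton] at hx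
      rw [if_neg (fun h => hx h.symm), zero_mul]
    have hsummable2 : ∀ i : ℕ, Summable (fun x : Fin d → ℤ => ∑ j ∈ I,
        ((if S i ω = x then (1 : ℝ) else 0) * (if S j ω = x then (1 : ℝ) else 0))) := by
      intro i
      apply summable_of_ne_finset_zero (s := ({S i ω} : Finset (Fin d → ℤ)))
      intro x hx
      simp only [Finset.mem_singleton] at hx
      exact Finset.sum_eq_zero fun j _ => by rw [if_neg (fun h => hx h.symm), zero_mul]
    rw [tsum_congr hNx, Summable.tsum_finsetSum (fun i _ => hsummable2 i)]
    refine Finset.sum_congr rfl fun i _ => ?_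
    rw [Summable.tsum_finsetSum (fun j _ => hsummable i j)]
    refine Finset.sum_congr rfl fun j _ => ?_
    rw [tsum_eq_single (S i ω) (fun x hx => by rw [if_neg (fun h => hx h.symm), zero_mul])]
    simp [hind]
  -- pointwise bound by n + 2 * sum T
  have hZle : ∀ ω, ∑ i ∈ I, ∑ j ∈ I, ind i j ω ≤ (n : ℝ) + 2 * ∑ i ∈ I, T i ω := by
    intro ω
    have hterm : ∀ i ∈ I, ∀ j ∈ I, ind i j ω ≤
        (if i = j then (1 : ℝ) else 0) +
          ((if i < j then ind i j ω else 0) + (if j < i then ind i j ω else 0)) := by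
      intro i _ j _
      rcases lt_trichotomy i j with h | h | h
      · rw [if_neg (by omega : ¬ i = j), if_pos h, if_neg (by omega : ¬ j < i)]
        have := hindnn i j ω; linarith
      · rw [if_pos h, if_neg (by omega : ¬ i < j), if_neg (by omega : ¬ j < i)]
        have := hindle i j ω; linarith
      · rw [if_neg (by omega : ¬ i = j), if_neg (by omega : ¬ i < j), if_pos h]
        have := hindnn i j ω; linarith
    have hA : ∑ i ∈ I, ∑ j ∈ I, (if i = j then (1 : ℝ) else 0) = (n : ℝ) := by
      have e : ∀ i ∈ I, ∑ j ∈ I, (if i = j then (1 : ℝ) else 0) = 1 := by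
        intro i hi
        rw [Finset.sum_ite_eq]
        exact if_pos hi
      rw [Finset.sum_congr rfl e, Finset.sum_const, nsmul_eq_mul, mul_one, hcardI]
    have hfilter : ∀ i : ℕ, I.filter (fun j => i < j) = Finset.Icc (i + 1) n := by
      intro i; ext j
      simp only [Finset.mem_filter, hI, Finset.mem_Icc]
      omega
    have hB : ∑ i ∈ I, ∑ j ∈ I, (if i < j then ind i j ω else 0) = ∑ i ∈ I, T i ω := by
      refine Finset.sum_congr rfl fun i _ => ?_
      rw [← Finset.sum_filter, hfilter i]
    have hC : ∑ i ∈ I, ∑ j ∈ I, (if j < i then ind i j ω else 0) = ∑ i ∈ I, T i ω := by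
      rw [Finset.sum_comm]
      rw [← hB]
      refine Finset.sum_congr rfl fun a _ => Finset.sum_congr rfl fun b _ => ?_
      refine if_congr Iff.rfl ?_ rfl
      simp only [hind]
      exact if_congr eq_comm rfl rfl
    calc ∑ i ∈ I, ∑ j ∈ I, ind i j ω
        ≤ ∑ i ∈ I, ∑ j ∈ I, ((if i = j then (1 : ℝ) else 0) +
            ((if i < j then ind i j ω else 0) + (if j < i then ind i j ω else 0))) :=
          Finset.sum_le_sum fun i hi => Finset.sum_le_sum fun j hj => hterm i hi j hj
      _ = (∑ i ∈ I, ∑ j ∈ I, (if i = j then (1 : ℝ) else 0)) +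
            ((∑ i ∈ I, ∑ j ∈ I, (if i < j then ind i j ω else 0)) +
              (∑ i ∈ I, ∑ j ∈ I, (if j < i then ind i j ω else 0))) := by
          simp_rw [Finset.sum_add_distrib]
      _ = (n : ℝ) + 2 * ∑ i ∈ I, T i ω := by rw [hA, hB, hC]; ring
  -- pointwise square bound
  have hsq : ∀ ω, (∑' x : Fin d → ℤ, (N n x ω) ^ 2) ^ 2
      ≤ 2 * (n : ℝ) ^ 2 + 8 * (n : ℝ) * ∑ i ∈ I, (T i ω) ^ 2 := by
    intro ω
    rw [step1 ω]
    have h1 := hZle ω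
    have hAnn : 0 ≤ ∑ i ∈ I, T i ω := Finset.sum_nonneg fun i _ => hTnn i ω
    have hZnn : 0 ≤ ∑ i ∈ I, ∑ j ∈ I, ind i j ω :=
      Finset.sum_nonneg fun i _ => Finset.sum_nonneg fun j _ => hindnn i j ω
    have h2 : (∑ i ∈ I, T i ω) ^ 2 ≤ (n : ℝ) * ∑ i ∈ I, (T i ω) ^ 2 := by
      have h := sq_sum_le_card_mul_sum_sq (s := I) (f := fun i => T i ω)
      rwa [hcardI] at h
    nlinarith [sq_nonneg ((n : ℝ) - 2 * ∑ i ∈ I, T i ω)]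
  -- measurability and integrability
  have hindmeas : ∀ i j : ℕ, Measurable (fun ω => ind i j ω) := fun i j =>
    Measurable.ite (hEmeas i j) measurable_const measurable_const
  have hprodint : ∀ i j l : ℕ, Integrable (fun ω => ind i j ω * ind i l ω) P := by
    intro i j l
    refine Integrable.mono' (integrable_const (1 : ℝ))
      (((hindmeas i j).mul (hindmeas i l)).aestronglyMeasurable) (ae_of_all _ fun ω => ?_)
    rw [Real.norm_eq_abs, abs_mul, abs_of_nonneg (hindnn i j ω), abs_of_nonneg (hindnn i l ω)]
    calc ind i j ω * ind i l ω ≤ 1 * 1 :=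
          mul_le_mul (hindle i j ω) (hindle i l ω) (hindnn i l ω) zero_le_one
      _ = 1 := one_mul 1
  have hTsqe : ∀ i : ℕ, (fun ω => (T i ω) ^ 2)
      = fun ω => ∑ j ∈ Finset.Icc (i + 1) n, ∑ l ∈ Finset.Icc (i + 1) n,
          ind i j ω * ind i l ω := by
    intro i; funext ω
    simp only [hT]
    rw [sq, Finset.sum_mul_sum]
  have hTsqint : ∀ i : ℕ, Integrable (fun ω => (T i ω) ^ 2) P := by
    intro i
    rw [hTsqe i]
    exact integrable_finset_sum _ fun j _ => integrable_finset_sum _ fun l _ => hprodint i j l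
  have hRHSint : Integrable
      (fun ω => 2 * (n : ℝ) ^ 2 + 8 * (n : ℝ) * ∑ i ∈ I, (T i ω) ^ 2) P := by
    refine (integrable_const _).add ?_
    exact (integrable_finset_sum I fun i _ => hTsqint i).const_mul _
  have hmain : ∫ ω, (∑' x : Fin d → ℤ, (N n x ω) ^ 2) ^ 2 ∂P
      ≤ ∫ ω, (2 * (n : ℝ) ^ 2 + 8 * (n : ℝ) * ∑ i ∈ I, (T i ω) ^ 2) ∂P :=
    integral_mono_of_nonneg (ae_of_all _ fun ω => sq_nonneg _) hRHSint (ae_of_all _ hsq)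
  have hint_eval : ∫ ω, (2 * (n : ℝ) ^ 2 + 8 * (n : ℝ) * ∑ i ∈ I, (T i ω) ^ 2) ∂P
      = 2 * (n : ℝ) ^ 2 + 8 * (n : ℝ) * ∑ i ∈ I, ∫ ω, (T i ω) ^ 2 ∂P := by
    rw [integral_add (integrable_const _)
      ((integrable_finset_sum I fun i _ => hTsqint i).const_mul _), integral_const,
      integral_const_mul, integral_finset_sum I fun i _ => hTsqint i]
    simp
  -- the key probabilistic computation
  have hblock : ∀ a b : ℕ, a ≤ b → ∀ ω,
      (S b ω = S a ω ↔ ∑ k ∈ Finset.Ico a b, X k ω = 0) := by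
    intro a b hab ω
    rw [hS b ω, hS a ω, Finset.range_eq_Ico,
      ← Finset.sum_Ico_consecutive _ (Nat.zero_le a) hab]
    rw [← Finset.range_eq_Ico, add_eq_left]
  have hrangeS : ∀ m : ℕ, {ω | ∑ k ∈ Finset.range m, X k ω = 0} = {ω | S m ω = 0} := by
    intro m; ext ω
    simp only [Set.mem_setOf_eq, hS m ω]
  have hc : ∀ i j l : ℕ, i < j → j ≤ l →
      ∫ ω, ind i j ω * ind i l ω ∂P = p (j - i) * p (l - j) := by
    intro i j l hij hjl
    have hprod_eq : (fun ω => ind i j ω * ind i l ω)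
        = Set.indicator ({ω | S j ω = S i ω} ∩ {ω | S l ω = S i ω}) (fun _ => (1 : ℝ)) := by
      funext ω
      by_cases h1 : S j ω = S i ω <;> by_cases h2 : S l ω = S i ω <;>
        simp [hind, h1, h2, Set.indicator, Set.mem_inter_iff, Set.mem_setOf_eq]
    have hmeaset : MeasurableSet ({ω | S j ω = S i ω} ∩ {ω | S l ω = S i ω}) :=
      (hEmeas i j).inter (hEmeas i l)
    rw [hprod_eq, integral_indicator_const (1 : ℝ) hmeaset, smul_eq_mul, mul_one]
    have hev : {ω | S j ω = S i ω} ∩ {ω | S l ω = S i ω}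
        = {ω | ∑ k ∈ Finset.Ico i j, X k ω = 0} ∩ {ω | ∑ k ∈ Finset.Ico j l, X k ω = 0} := by
      ext ω
      simp only [Set.mem_inter_iff, Set.mem_setOf_eq]
      rw [← hblock i j hij.le ω, ← hblock j l hjl ω]
      exact ⟨fun h => ⟨h.1, h.2.trans h.1.symm⟩, fun h => ⟨h.1, h.2.trans h.1⟩⟩
    rw [hev, measureReal_def, aux_prob_mul X hmeas hindep hident hij.le hjl, ENNReal.toReal_mul,
      hrangeS (j - i), hrangeS (l - j)]
  -- bound on each ∫ T i ^ 2
  have hTisq : ∀ i ∈ I, ∫ ω, (T i ω) ^ 2 ∂P ≤ 2 * (1 + G1) ^ 2 := by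
    intro i hiI
    have hi1 : 1 ≤ i := by
      rw [hI, Finset.mem_Icc] at hiI; exact hiI.1
    set J : Finset ℕ := Finset.Icc (i + 1) n with hJ
    have hintegral : ∫ ω, (T i ω) ^ 2 ∂P
        = ∑ j ∈ J, ∑ l ∈ J, ∫ ω, ind i j ω * ind i l ω ∂P := by
      rw [hTsqe i,
        integral_finset_sum _ (fun j _ => integrable_finset_sum _ fun l _ => hprodint i j l)]
      exact Finset.sum_congr rfl fun j _ => integral_finset_sum _ fun l _ => hprodint i j l
    have hcsym : ∀ j l : ℕ, (∫ ω, ind i j ω * ind i l ω ∂P)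
        = ∫ ω, ind i l ω * ind i j ω ∂P := by
      intro j l
      have e : (fun ω => ind i j ω * ind i l ω) = fun ω => ind i l ω * ind i j ω :=
        funext fun ω => mul_comm _ _
      rw [e]
    have hub : ∀ j ∈ J, ∀ l ∈ J, (∫ ω, ind i j ω * ind i l ω ∂P)
        ≤ (if j ≤ l then p (j - i) * p (l - j) else 0)
          + (if l < j then p (l - i) * p (j - l) else 0) := by
      intro j hj l hl
      rw [hJ, Finset.mem_Icc] at hj hl
      rcases le_or_gt j l with h | h
      · rw [if_pos h, if_neg (by omega), add_zero]
        exact le_of_eq (hc i j l (by omega) h)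
      · rw [if_neg (by omega), if_pos h, zero_add, hcsym j l]
        exact le_of_eq (hc i l j (by omega) h.le)
    have hinner : ∀ j ∈ J, (∑ l ∈ J, (if j ≤ l then p (l - j) else 0)) ≤ 1 + G1 := by
      intro j hj
      rw [hJ, Finset.mem_Icc] at hj
      rw [← Finset.sum_filter]
      have hsub : J.filter (fun l => j ≤ l) ⊆ Finset.Icc j n := by
        intro l hl
        rw [Finset.mem_filter, hJ, Finset.mem_Icc] at hl
        rw [Finset.mem_Icc]
        omega
      have h1 : ∑ l ∈ J.filter (fun l => j ≤ l), p (l - j)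
          ≤ ∑ l ∈ Finset.Icc j n, p (l - j) :=
        Finset.sum_le_sum_of_subset_of_nonneg hsub fun _ _ _ => hpnn _
      have h2 : Finset.Icc j n = (Finset.Ioc j n).cons j (by simp) :=
        Finset.Icc_eq_cons_Ioc hj.2
      have h3 : ∑ l ∈ Finset.Ioc j n, p (l - j) ≤ G1 := by
        refine hsum (Finset.Ioc j n) (fun l => l - j) ?_ ?_
        · intro a ha b hb hab
          rw [Finset.mem_coe, Finset.mem_Ioc] at ha hb
          have hab' : a - j = b - j := hab
          omega
        · intro l hl
          rw [Finset.mem_Ioc] at hl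
          show 1 ≤ l - j
          omega
      calc ∑ l ∈ J.filter (fun l => j ≤ l), p (l - j)
          ≤ ∑ l ∈ Finset.Icc j n, p (l - j) := h1
        _ = p (j - j) + ∑ l ∈ Finset.Ioc j n, p (l - j) := by rw [h2, Finset.sum_cons]
        _ = 1 + ∑ l ∈ Finset.Ioc j n, p (l - j) := by rw [Nat.sub_self, hp0]
        _ ≤ 1 + G1 := by linarith
    have hD1 : ∑ j ∈ J, ∑ l ∈ J, (if j ≤ l then p (j - i) * p (l - j) else 0)
        ≤ G1 * (1 + G1) := by
      have hrow : ∀ j ∈ J, ∑ l ∈ J, (if j ≤ l then p (j - i) * p (l - j) else 0)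
          ≤ p (j - i) * (1 + G1) := by
        intro j hj
        have e : ∑ l ∈ J, (if j ≤ l then p (j - i) * p (l - j) else 0)
            = p (j - i) * ∑ l ∈ J, (if j ≤ l then p (l - j) else 0) := by
          rw [Finset.mul_sum]
          exact Finset.sum_congr rfl fun l _ => by split_ifs <;> simp
        rw [e]
        exact mul_le_mul_of_nonneg_left (hinner j hj) (hpnn _)
      have hJsum : ∑ j ∈ J, p (j - i) ≤ G1 := by
        refine hsum J (fun j => j - i) ?_ ?_
        · intro a ha b hb hab
          rw [Finset.mem_coe, hJ, Finset.mem_Icc] at ha hb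
          have hab' : a - i = b - i := hab
          omega
        · intro j hj
          rw [hJ, Finset.mem_Icc] at hj
          show 1 ≤ j - i
          omega
      calc ∑ j ∈ J, ∑ l ∈ J, (if j ≤ l then p (j - i) * p (l - j) else 0)
          ≤ ∑ j ∈ J, p (j - i) * (1 + G1) := Finset.sum_le_sum hrow
        _ = (∑ j ∈ J, p (j - i)) * (1 + G1) := by rw [Finset.sum_mul]
        _ ≤ G1 * (1 + G1) := mul_le_mul_of_nonneg_right hJsum (by linarith)
    have hD2 : ∑ j ∈ J, ∑ l ∈ J, (if l < j then p (l - i) * p (j - l) else 0)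
        ≤ G1 * (1 + G1) := by
      rw [Finset.sum_comm]
      calc ∑ l ∈ J, ∑ j ∈ J, (if l < j then p (l - i) * p (j - l) else 0)
          ≤ ∑ l ∈ J, ∑ j ∈ J, (if l ≤ j then p (l - i) * p (j - l) else 0) := by
            refine Finset.sum_le_sum fun l _ => Finset.sum_le_sum fun j _ => ?_
            split_ifs with h1 h2
            · exact le_rfl
            · omega
            · exact mul_nonneg (hpnn _) (hpnn _)
            · exact le_rfl
        _ ≤ G1 * (1 + G1) := hD1
    calc ∫ ω, (T i ω) ^ 2 ∂P
        = ∑ j ∈ J, ∑ l ∈ J, ∫ ω, ind i j ω * ind i l ω ∂P := hintegral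
      _ ≤ ∑ j ∈ J, ∑ l ∈ J, ((if j ≤ l then p (j - i) * p (l - j) else 0)
            + (if l < j then p (l - i) * p (j - l) else 0)) :=
          Finset.sum_le_sum fun j hj => Finset.sum_le_sum fun l hl => hub j hj l hl
      _ = (∑ j ∈ J, ∑ l ∈ J, (if j ≤ l then p (j - i) * p (l - j) else 0))
            + ∑ j ∈ J, ∑ l ∈ J, (if l < j then p (l - i) * p (j - l) else 0) := by
          simp_rw [Finset.sum_add_distrib]
      _ ≤ G1 * (1 + G1) + G1 * (1 + G1) := add_le_add hD1 hD2
      _ ≤ 2 * (1 + G1) ^ 2 := by nlinarith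
  -- final assembly
  have hfinal : ∑ i ∈ I, ∫ ω, (T i ω) ^ 2 ∂P ≤ (n : ℝ) * (2 * (1 + G1) ^ 2) := by
    calc ∑ i ∈ I, ∫ ω, (T i ω) ^ 2 ∂P ≤ ∑ _i ∈ I, 2 * (1 + G1) ^ 2 :=
          Finset.sum_le_sum hTisq
      _ = (I.card : ℝ) * (2 * (1 + G1) ^ 2) := by rw [Finset.sum_const, nsmul_eq_mul]
      _ = (n : ℝ) * (2 * (1 + G1) ^ 2) := by rw [hcardI]
  have hnn : (0 : ℝ) ≤ (n : ℝ) := Nat.cast_nonneg n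
  calc ∫ ω, (∑' x : Fin d → ℤ, (N n x ω) ^ 2) ^ 2 ∂P
      ≤ 2 * (n : ℝ) ^ 2 + 8 * (n : ℝ) * ∑ i ∈ I, ∫ ω, (T i ω) ^ 2 ∂P := by
        rw [← hint_eval]; exact hmain
    _ ≤ 2 * (n : ℝ) ^ 2 + 8 * (n : ℝ) * ((n : ℝ) * (2 * (1 + G1) ^ 2)) := by
        have h8 : (0 : ℝ) ≤ 8 * (n : ℝ) := by positivity
        nlinarith [mul_le_mul_of_nonneg_left hfinal h8]
    _ = (2 + 16 * (1 + G1) ^ 2) * (n : ℝ) ^ 2 := by ring
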